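/- For the Rosen continued fraction convergents of x ∈ [-λ/2, λ/2), the denominators satisfy q_n > 0 for all n ≥ 0 (as long as the expansion is defined up to step n). -/

import Mathlib

open Real

/-- The Rosen continued fraction map `S(x) = |1/x| - [|1/x|]_λ` on `[-λ/2, λ/2)`,
where `[w]_λ = bλ` for the unique integer `b` with `w ∈ [bλ - λ/2, bλ + λ/2)`. -/
noncomputable def rosenMap (lam : ℝ) (x : ℝ) : ℝ :=
  if x = 0 then 0 else |x⁻¹| - (⌊|x⁻¹| / lam + 1 / 2⌋ : ℤ) * lam

/-- The sign digit `ε_{n+1}(x) = sgn(S^n x)`. -/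
noncomputable def rosenEps (lam x : ℝ) (n : ℕ) : ℝ :=
  Real.sign ((rosenMap lam)^[n] x)

/-- The digit `a_{n+1}(x) = [|1/S^n x|]_λ`. -/
noncomputable def rosenA (lam x : ℝ) (n : ℕ) : ℝ :=
  (⌊|((rosenMap lam)^[n] x)⁻¹| / lam + 1 / 2⌋ : ℤ) * lam

/-- The convergent matrix `[[p_{n-1}, p_n], [q_{n-1}, q_n]] = ∏_{i=1}^n [[0, ε_i], [1, a_i]]`. -/
noncomputable def rosenMat (lam x : ℝ) (n : ℕ) : Matrix (Fin 2) (Fin 2) ℝ :=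
  ((List.range n).map (fun i => !![0, rosenEps lam x i; 1, rosenA lam x i])).prod

/-- The numerator `p_n` of the `n`-th Rosen convergent. -/
noncomputable def rosenP (lam x : ℝ) (n : ℕ) : ℝ := rosenMat lam x n 0 1

/-- The denominator `q_n` of the `n`-th Rosen convergent. -/
noncomputable def rosenQ (lam x : ℝ) (n : ℕ) : ℝ := rosenMat lam x n 1 1

/-! ### Basic facts about `lam = 2 cos (π/k)` -/

lemma rosen_klt {k : ℕ} (hk : 3 ≤ k) : (0:ℝ) < k := by
  have : (3:ℝ) ≤ k := by exact_mod_cast hk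
  linarith

lemma rosen_theta_pos {k : ℕ} (hk : 3 ≤ k) : 0 < π / k :=
  div_pos Real.pi_pos (rosen_klt hk)

lemma rosen_theta_le {k : ℕ} (hk : 3 ≤ k) : π / k ≤ π / 3 := by
  apply div_le_div_of_nonneg_left Real.pi_pos.le (by norm_num)
  exact_mod_cast hk

lemma rosen_theta_lt_pi {k : ℕ} (hk : 3 ≤ k) : π / k < π := by
  have := Real.pi_pos
  have h3 : π / k ≤ π / 3 := rosen_theta_le hk
  linarith

lemma rosen_sin_pos {k : ℕ} (hk : 3 ≤ k) : 0 < Real.sin (π / k) :=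
  Real.sin_pos_of_pos_of_lt_pi (rosen_theta_pos hk) (rosen_theta_lt_pi hk)

lemma rosen_lam_ge_one {k : ℕ} (hk : 3 ≤ k) {lam : ℝ}
    (hlam : lam = 2 * Real.cos (π / k)) : 1 ≤ lam := by
  have h1 : Real.cos (π / 3) ≤ Real.cos (π / k) := by
    rcases eq_or_lt_of_le (rosen_theta_le hk) with h | h
    · rw [h]
    · exact (Real.cos_lt_cos_of_nonneg_of_le_pi (rosen_theta_pos hk).le
        (by linarith [Real.pi_pos]) h).le
  rw [Real.cos_pi_div_three] at h1
  rw [hlam]; linarith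

lemma rosen_lam_lt_two {k : ℕ} (hk : 3 ≤ k) {lam : ℝ}
    (hlam : lam = 2 * Real.cos (π / k)) : lam < 2 := by
  have h1 : Real.cos (π / k) < Real.cos 0 :=
    Real.cos_lt_cos_of_nonneg_of_le_pi le_rfl (rosen_theta_lt_pi hk).le (rosen_theta_pos hk)
  rw [Real.cos_zero] at h1
  rw [hlam]; linarith

lemma rosen_lam_pos {k : ℕ} (hk : 3 ≤ k) {lam : ℝ}
    (hlam : lam = 2 * Real.cos (π / k)) : 0 < lam := by
  linarith [rosen_lam_ge_one hk hlam]

/-! ### The Chebyshev-like sequence `B m = sin(mθ)/sin θ` -/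

noncomputable def chebB (lam : ℝ) : ℕ → ℝ
  | 0 => 0
  | 1 => 1
  | (m+2) => lam * chebB lam (m+1) - chebB lam m

lemma chebB_zero (lam : ℝ) : chebB lam 0 = 0 := rfl
lemma chebB_one (lam : ℝ) : chebB lam 1 = 1 := rfl
lemma chebB_two {lam : ℝ} : chebB lam 2 = lam := by
  show lam * chebB lam 1 - chebB lam 0 = lam
  rw [chebB_one, chebB_zero]; ring
lemma chebB_succ_succ (lam : ℝ) (m : ℕ) :
    chebB lam (m+2) = lam * chebB lam (m+1) - chebB lam m := rfl

lemma chebB_sin {k : ℕ} (hk : 3 ≤ k) {lam : ℝ}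
    (hlam : lam = 2 * Real.cos (π / k)) (m : ℕ) :
    chebB lam m * Real.sin (π / k) = Real.sin (m * (π / k)) := by
  induction m using Nat.twoStepInduction with
  | zero => simp [chebB_zero]
  | one => simp [chebB_one]
  | more m ih1 ih2 =>
    rw [chebB_succ_succ, sub_mul, mul_assoc, ih2, ih1]
    push_cast
    have h2 : (m:ℝ) * (π/k) = ((m:ℝ)+1) * (π/k) - (π/k) := by ring
    have h3 : ((m:ℝ)+2) * (π/k) = ((m:ℝ)+1) * (π/k) + (π/k) := by ring
    rw [h2, h3, Real.sin_add, Real.sin_sub, hlam]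
    ring

lemma chebB_pos {k : ℕ} (hk : 3 ≤ k) {lam : ℝ}
    (hlam : lam = 2 * Real.cos (π / k)) {m : ℕ} (h1 : 1 ≤ m) (h2 : m + 1 ≤ k) :
    0 < chebB lam m := by
  have hs := rosen_sin_pos hk
  have hsin : 0 < Real.sin (m * (π/k)) := by
    apply Real.sin_pos_of_pos_of_lt_pi
    · apply mul_pos _ (rosen_theta_pos hk)
      exact_mod_cast h1
    · have hm : (m:ℝ) ≤ (k:ℝ) - 1 := by
        have : (m:ℝ) + 1 ≤ (k:ℝ) := by exact_mod_cast h2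
        linarith
      have hkpos := rosen_klt hk
      calc (m:ℝ) * (π/k) ≤ ((k:ℝ) - 1) * (π/k) := by
            apply mul_le_mul_of_nonneg_right hm (rosen_theta_pos hk).le
        _ = π - π/k := by field_simp
        _ < π := by linarith [rosen_theta_pos hk]
  have := chebB_sin hk hlam m
  nlinarith [this]

lemma chebB_nonneg {k : ℕ} (hk : 3 ≤ k) {lam : ℝ}
    (hlam : lam = 2 * Real.cos (π / k)) {m : ℕ} (h2 : m ≤ k) :
    0 ≤ chebB lam m := by
  have hs := rosen_sin_pos hk
  have hsin : 0 ≤ Real.sin (m * (π/k)) := by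
    apply Real.sin_nonneg_of_nonneg_of_le_pi
    · positivity
    · have hm : (m:ℝ) ≤ (k:ℝ) := by exact_mod_cast h2
      have hkpos := rosen_klt hk
      calc (m:ℝ) * (π/k) ≤ (k:ℝ) * (π/k) := by
            apply mul_le_mul_of_nonneg_right hm (rosen_theta_pos hk).le
        _ = π := by field_simp
  have := chebB_sin hk hlam m
  nlinarith [this]

/-- The inequality expressing that `-B(k-3)/B(k-2) ≤ -lam/2`, used in the
admissibility argument; valid for `k ≥ 4`. -/
lemma rosen_adm_ineq {k : ℕ} (hk : 4 ≤ k) {lam : ℝ}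
    (hlam : lam = 2 * Real.cos (π / k)) :
    lam * chebB lam (k-2) ≤ 2 * chebB lam (k-3) := by
  have hk3 : 3 ≤ k := by omega
  have hs := rosen_sin_pos hk3
  have hkpos := rosen_klt hk3
  rw [← mul_le_mul_iff_left₀ hs, mul_assoc, mul_assoc, chebB_sin hk3 hlam, chebB_sin hk3 hlam]
  have e2 : ((k-2 : ℕ) : ℝ) = (k:ℝ) - 2 := by
    have : (2:ℕ) ≤ k := by omega
    push_cast [Nat.cast_sub this]; ring
  have e3 : ((k-3 : ℕ) : ℝ) = (k:ℝ) - 3 := by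
    have : (3:ℕ) ≤ k := by omega
    push_cast [Nat.cast_sub this]; ring
  rw [e2, e3]
  have hkne : (k:ℝ) ≠ 0 := ne_of_gt hkpos
  have f2 : ((k:ℝ) - 2) * (π/k) = π - 2*(π/k) := by field_simp
  have f3 : ((k:ℝ) - 3) * (π/k) = π - 3*(π/k) := by field_simp
  rw [f2, f3, Real.sin_pi_sub, Real.sin_pi_sub]
  set θ := π / k with hθ
  have h3 : (3:ℝ)*θ = 2*θ + θ := by ring
  rw [h3, Real.sin_add, Real.sin_two_mul, Real.cos_two_mul]
  have hcos2 : 0 ≤ Real.cos (2*θ) := by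
    apply Real.cos_nonneg_of_mem_Icc
    constructor
    · have := rosen_theta_pos hk3
      have := Real.pi_pos
      simp only [hθ] at *
      nlinarith
    · have hle : θ ≤ π / 4 := by
        rw [hθ]
        apply div_le_div_of_nonneg_left Real.pi_pos.le (by norm_num)
        exact_mod_cast hk
      linarith
  rw [Real.cos_two_mul] at hcos2
  have hsθ : 0 < Real.sin θ := hs
  rw [hlam]
  nlinarith [hcos2, hsθ]

/-! ### Orbit and digit facts -/

lemma rosenMap_mem {lam : ℝ} (hl : 0 < lam) (t : ℝ) :
    rosenMap lam t ∈ Set.Ico (-lam / 2) (lam / 2) := by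
  unfold rosenMap
  split_ifs with h
  · constructor <;> [linarith; linarith]
  · set w := |t⁻¹| with hw
    set b := ⌊w / lam + 1 / 2⌋ with hb
    have h1 : (b:ℝ) ≤ w / lam + 1/2 := Int.floor_le _
    have h2 : w / lam + 1/2 < (b:ℝ) + 1 := Int.lt_floor_add_one _
    have hkey : (w / lam + 1/2) * lam = w + lam/2 := by field_simp
    have h1' : (b:ℝ) * lam ≤ w + lam/2 := by
      calc (b:ℝ) * lam ≤ (w / lam + 1/2) * lam := by
            apply mul_le_mul_of_nonneg_right h1 hl.le
        _ = w + lam/2 := hkey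
    have h2' : w + lam/2 < ((b:ℝ) + 1) * lam := by
      calc w + lam/2 = (w / lam + 1/2) * lam := hkey.symm
        _ < ((b:ℝ) + 1) * lam := by apply mul_lt_mul_of_pos_right h2 hl
    constructor
    · have : ((b:ℝ)+1) * lam = (b:ℝ)*lam + lam := by ring
      nlinarith
    · nlinarith

lemma rosen_iter_mem {lam : ℝ} (hl : 0 < lam) {x : ℝ}
    (hx : x ∈ Set.Ico (-lam / 2) (lam / 2)) (i : ℕ) :
    (rosenMap lam)^[i] x ∈ Set.Ico (-lam / 2) (lam / 2) := by
  induction i with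
  | zero => exact hx
  | succ i ih =>
    rw [Function.iterate_succ_apply']
    exact rosenMap_mem hl _

lemma rosen_abs_inv_ge {k : ℕ} (hk : 3 ≤ k) {lam : ℝ}
    (hlam : lam = 2 * Real.cos (π / k)) {t : ℝ}
    (ht : t ∈ Set.Ico (-lam / 2) (lam / 2)) (ht0 : t ≠ 0) :
    2 / lam ≤ |t⁻¹| := by
  have hl := rosen_lam_pos hk hlam
  have habs : |t| ≤ lam / 2 := by
    rw [abs_le]
    exact ⟨by linarith [ht.1], ht.2.le⟩
  have habs0 : 0 < |t| := abs_pos.mpr ht0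
  rw [abs_inv]
  calc 2 / lam = (lam/2)⁻¹ := by rw [inv_div]
    _ ≤ |t|⁻¹ := by apply inv_anti₀ habs0 habs

lemma rosen_floor_ge_one {k : ℕ} (hk : 3 ≤ k) {lam : ℝ}
    (hlam : lam = 2 * Real.cos (π / k)) {t : ℝ}
    (ht : t ∈ Set.Ico (-lam / 2) (lam / 2)) (ht0 : t ≠ 0) :
    1 ≤ ⌊|t⁻¹| / lam + 1 / 2⌋ := by
  have hl := rosen_lam_pos hk hlam
  have hlt2 := rosen_lam_lt_two hk hlam
  have hinv := rosen_abs_inv_ge hk hlam ht ht0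
  apply Int.le_floor.mpr
  push_cast
  have h1 : lam / 2 ≤ 2 / lam := by
    rw [div_le_div_iff₀ (by linarith) hl]
    nlinarith
  have h2 : lam / 2 ≤ |t⁻¹| := le_trans h1 hinv
  have h3 : 1/2 ≤ |t⁻¹| / lam := by
    rw [le_div_iff₀ hl]
    linarith
  linarith

lemma rosenA_ge {k : ℕ} (hk : 3 ≤ k) {lam : ℝ}
    (hlam : lam = 2 * Real.cos (π / k)) {x : ℝ}
    (hx : x ∈ Set.Ico (-lam / 2) (lam / 2)) {i : ℕ}
    (hi : (rosenMap lam)^[i] x ≠ 0) : lam ≤ rosenA lam x i := by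
  have hl := rosen_lam_pos hk hlam
  have hmem := rosen_iter_mem hl hx i
  have h1 := rosen_floor_ge_one hk hlam hmem hi
  unfold rosenA
  have : (1:ℝ) ≤ ((⌊|((rosenMap lam)^[i] x)⁻¹| / lam + 1 / 2⌋ : ℤ) : ℝ) := by
    exact_mod_cast h1
  nlinarith

/-! ### Shift lemmas -/

lemma rosenEps_shift (lam x : ℝ) (i : ℕ) :
    rosenEps lam x (i+1) = rosenEps lam (rosenMap lam x) i := by
  unfold rosenEps
  rw [Function.iterate_succ_apply]

lemma rosenA_shift (lam x : ℝ) (i : ℕ) :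
    rosenA lam x (i+1) = rosenA lam (rosenMap lam x) i := by
  unfold rosenA
  rw [Function.iterate_succ_apply]

lemma rosenMat_succ (lam x : ℝ) (n : ℕ) :
    rosenMat lam x (n+1) =
      !![0, rosenEps lam x 0; 1, rosenA lam x 0] * rosenMat lam (rosenMap lam x) n := by
  unfold rosenMat
  rw [List.range_succ_eq_map, List.map_cons, List.prod_cons, List.map_map]
  congr 1

lemma rosenQ_zero (lam x : ℝ) : rosenQ lam x 0 = 1 := by
  simp [rosenQ, rosenMat, Matrix.one_apply]

lemma rosenP_zero (lam x : ℝ) : rosenP lam x 0 = 0 := by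
  simp [rosenP, rosenMat, Matrix.one_apply]

lemma rosenQ_succ (lam x : ℝ) (n : ℕ) :
    rosenQ lam x (n+1) =
      rosenP lam (rosenMap lam x) n + rosenA lam x 0 * rosenQ lam (rosenMap lam x) n := by
  rw [rosenQ, rosenMat_succ, Matrix.mul_apply, Fin.sum_univ_two]
  simp [rosenP, rosenQ]

lemma rosenP_succ (lam x : ℝ) (n : ℕ) :
    rosenP lam x (n+1) = rosenEps lam x 0 * rosenQ lam (rosenMap lam x) n := by
  rw [rosenP, rosenMat_succ, Matrix.mul_apply, Fin.sum_univ_two]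
  simp [rosenQ]

/-! ### Digit facts -/

lemma rosen_sign_neg {t : ℝ} (h : Real.sign t = -1) : t < 0 := by
  rcases lt_trichotomy t 0 with h1 | h1 | h1
  · exact h1
  · rw [h1, Real.sign_zero] at h; norm_num at h
  · rw [Real.sign_of_pos h1] at h; norm_num at h

lemma rosen_digit_floor_one {k : ℕ} (hk : 3 ≤ k) {lam : ℝ}
    (hlam : lam = 2 * Real.cos (π / k)) {x : ℝ} {i : ℕ} (ha : rosenA lam x i = lam) :
    ⌊|((rosenMap lam)^[i] x)⁻¹| / lam + 1 / 2⌋ = 1 := by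
  have hl := rosen_lam_pos hk hlam
  have hne : lam ≠ 0 := ne_of_gt hl
  unfold rosenA at ha
  have h2 := mul_right_cancel₀ hne (ha.trans (one_mul lam).symm)
  exact_mod_cast h2

lemma rosen_digit_step {k : ℕ} (hk : 3 ≤ k) {lam : ℝ}
    (hlam : lam = 2 * Real.cos (π / k)) {x : ℝ} {i : ℕ}
    (he : rosenEps lam x i = -1) (ha : rosenA lam x i = lam) :
    (rosenMap lam)^[i] x < 0 ∧
      (rosenMap lam)^[i+1] x = -((rosenMap lam)^[i] x)⁻¹ - lam := by
  have hfl := rosen_digit_floor_one hk hlam ha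
  set t := (rosenMap lam)^[i] x with ht
  have htneg : t < 0 := by
    unfold rosenEps at he
    rw [← ht] at he
    exact rosen_sign_neg he
  have ht0 : t ≠ 0 := ne_of_lt htneg
  refine ⟨htneg, ?_⟩
  rw [Function.iterate_succ_apply', ← ht]
  unfold rosenMap
  rw [if_neg ht0, hfl, abs_of_neg (inv_lt_zero.mpr htneg)]
  push_cast
  ring

/-! ### Admissibility: a run of `(-1, lam)` digits has length at most `k - 3` -/

lemma rosen_run_bound {k : ℕ} (hk : 3 ≤ k) {lam : ℝ}
    (hlam : lam = 2 * Real.cos (π / k)) {x : ℝ}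
    (hx : x ∈ Set.Ico (-lam / 2) (lam / 2)) {n : ℕ}
    (hdef : ∀ i < n, (rosenMap lam)^[i] x ≠ 0) {m : ℕ} (hm : m ≤ n)
    (hrun : ∀ i < m, rosenEps lam x i = -1 ∧ rosenA lam x i = lam) :
    m + 3 ≤ k := by
  by_contra hc
  push_neg at hc
  have hl := rosen_lam_pos hk hlam
  by_cases hk4 : 4 ≤ k
  · -- k ≥ 4 : use the chain of inequalities
    set M := k - 2 with hMdef
    have hMm : M ≤ m := by omega
    have hM1 : 1 ≤ M := by omega
    have hstep : ∀ i < M, (rosenMap lam)^[i] x < 0 ∧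
        (rosenMap lam)^[i+1] x = -((rosenMap lam)^[i] x)⁻¹ - lam := by
      intro i hi
      obtain ⟨he, ha⟩ := hrun i (lt_of_lt_of_le hi hMm)
      exact rosen_digit_step hk hlam he ha
    have claim : ∀ s, s + 1 ≤ M →
        chebB lam (s+1) * (rosenMap lam)^[M-1-s] x + chebB lam s < 0 := by
      intro s
      induction s with
      | zero =>
        intro h
        rw [chebB_one, chebB_zero]
        have := (hstep (M-1) (by omega)).1
        simpa using this
      | succ s ihs =>
        intro h
        have prev := ihs (by omega)
        have hpos : M-1-s = (M-1-(s+1)) + 1 := by omega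
        obtain ⟨hun, hueq⟩ := hstep (M-1-(s+1)) (by omega)
        rw [hpos, hueq] at prev
        set u := (rosenMap lam)^[M-1-(s+1)] x with hu
        have hu0 : u ≠ 0 := ne_of_lt hun
        have hmul := mul_neg_of_neg_of_pos prev (by linarith : (0:ℝ) < -u)
        have heq : (chebB lam (s+1) * (-u⁻¹ - lam) + chebB lam s) * (-u)
            = chebB lam (s+2) * u + chebB lam (s+1) := by
          rw [chebB_succ_succ]
          field_simp
          ring
        rw [heq] at hmul
        exact hmul
    have hfin := claim (M-1) (by omega)
    have h00 : M-1-(M-1) = 0 := by omega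
    have h11 : M-1+1 = M := by omega
    rw [h00, h11] at hfin
    simp only [Function.iterate_zero_apply] at hfin
    have hxl : -(lam/2) ≤ x := by have := hx.1; linarith
    have hBM : 0 ≤ chebB lam M := chebB_nonneg hk hlam (by omega)
    have hadm := rosen_adm_ineq hk4 hlam
    have hM3 : M - 1 = k - 3 := by omega
    have hM2 : M = k - 2 := hMdef
    rw [hM3, hM2] at hfin
    nlinarith [mul_le_mul_of_nonneg_left hxl hBM, hfin, hadm]
  · -- k = 3 : even a single (-1, lam) digit is impossible
    have hk3 : k = 3 := by omega
    have h0m : 0 < m := by omega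
    have hx0 : x ≠ 0 := by simpa using hdef 0 (lt_of_lt_of_le h0m hm)
    obtain ⟨he, ha⟩ := hrun 0 h0m
    have hfl : ⌊|((rosenMap lam)^[0] x)⁻¹| / lam + 1 / 2⌋ = 1 :=
      rosen_digit_floor_one hk hlam ha
    simp only [Function.iterate_zero_apply] at hfl
    have hlam1 : lam = 1 := by
      rw [hlam, hk3]
      norm_num [Real.cos_pi_div_three]
    have hinv : 2 / lam ≤ |x⁻¹| := rosen_abs_inv_ge hk hlam hx hx0
    rw [hlam1] at hinv hfl
    norm_num at hinv
    have h2 : (2:ℤ) ≤ ⌊|x⁻¹| / 1 + 1 / 2⌋ := by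
      apply Int.le_floor.mpr
      push_cast
      rw [div_one]
      rw [abs_inv]; linarith
    omega

/-! ### The main induction -/

lemma rosen_main {k : ℕ} (hk : 3 ≤ k) {lam : ℝ}
    (hlam : lam = 2 * Real.cos (π / k)) :
    ∀ n (x : ℝ), x ∈ Set.Ico (-lam / 2) (lam / 2) →
      (∀ i < n, (rosenMap lam)^[i] x ≠ 0) →
      0 < rosenQ lam x n ∧
      ∀ m ≤ n, (∀ i < m, rosenEps lam x i = -1 ∧ rosenA lam x i = lam) →
        (m = n ∨ ¬(rosenEps lam x m = -1 ∧ rosenA lam x m = lam)) →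
        0 < chebB lam (m+2) * rosenP lam x n + chebB lam (m+1) * rosenQ lam x n := by
  have hl := rosen_lam_pos hk hlam
  have hl1 := rosen_lam_ge_one hk hlam
  intro n
  induction n with
  | zero =>
    intro x hx hdef
    refine ⟨by rw [rosenQ_zero]; norm_num, ?_⟩
    intro m hm hrun hex
    have hm0 : m = 0 := Nat.le_zero.mp hm
    subst hm0
    rw [rosenP_zero, rosenQ_zero]
    simp only [show (0:ℕ)+1 = 1 from rfl, chebB_one]
    norm_num
  | succ n IH =>
    intro x hx hdef
    classical
    have hx0 : x ≠ 0 := by simpa using hdef 0 (Nat.succ_pos n)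
    set y := rosenMap lam x with hy
    have hymem : y ∈ Set.Ico (-lam / 2) (lam / 2) := by rw [hy]; exact rosenMap_mem hl x
    have hdefy : ∀ i < n, (rosenMap lam)^[i] y ≠ 0 := by
      intro i hi
      have := hdef (i+1) (by omega)
      rw [Function.iterate_succ_apply] at this
      rwa [← hy] at this
    obtain ⟨hq, hratio⟩ := IH y hymem hdefy
    set p := rosenP lam y n with hp
    set q := rosenQ lam y n with hqd
    set P : ℕ → Prop := fun m => ∀ i < m, rosenEps lam y i = -1 ∧ rosenA lam y i = lam with hP
    set μ := Nat.findGreatest P n with hμ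
    have hμn : μ ≤ n := Nat.findGreatest_le n
    have hP0 : P 0 := by intro i hi; exact absurd hi (Nat.not_lt_zero i)
    have hPμ : P μ := Nat.findGreatest_spec (Nat.zero_le n) hP0
    have hexμ : μ = n ∨ ¬(rosenEps lam y μ = -1 ∧ rosenA lam y μ = lam) := by
      rcases eq_or_lt_of_le hμn with h | h
      · exact Or.inl h
      · right
        intro hd
        have hP1 : P (μ+1) := by
          intro i hi
          rcases Nat.lt_succ_iff_lt_or_eq.mp hi with hi' | hi'
          · exact hPμ i hi'
          · rw [hi']; exact hd
        have := Nat.le_findGreatest h hP1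
        omega
    have hr := hratio μ hμn hPμ hexμ
    have hadm : μ + 3 ≤ k := rosen_run_bound hk hlam hymem hdefy hμn hPμ
    have hB2pos : 0 < chebB lam (μ+2) := chebB_pos hk hlam (by omega) (by omega)
    have hB3 : 0 ≤ chebB lam (μ+3) := chebB_nonneg hk hlam (by omega)
    rw [chebB_succ_succ] at hB3
    have hplq : 0 < p + lam * q := by
      by_contra hcon
      push_neg at hcon
      have h1 : chebB lam (μ+2) * (p + lam*q) ≤ 0 :=
        mul_nonpos_of_nonneg_of_nonpos hB2pos.le hcon
      have h2 : 0 ≤ (lam * chebB lam (μ+2) - chebB lam (μ+1)) * q :=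
        mul_nonneg hB3 hq.le
      nlinarith [hr]
    have ha0 : lam ≤ rosenA lam x 0 := rosenA_ge hk hlam hx (by simpa using hx0)
    have hqsucc : rosenQ lam x (n+1) = p + rosenA lam x 0 * q := by
      rw [hp, hqd, hy, rosenQ_succ]
    have hpsucc : rosenP lam x (n+1) = rosenEps lam x 0 * q := by
      rw [hqd, hy, rosenP_succ]
    have hQpos : 0 < rosenQ lam x (n+1) := by
      rw [hqsucc]
      nlinarith [hplq, mul_nonneg (sub_nonneg.mpr ha0) hq.le]
    refine ⟨hQpos, ?_⟩
    intro m hm hrun hex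
    rw [hpsucc, hqsucc]
    have heps0 : rosenEps lam x 0 = Real.sign x := by simp [rosenEps]
    rcases lt_or_gt_of_ne hx0 with hneg | hpos
    · -- x < 0
      have he : rosenEps lam x 0 = -1 := by rw [heps0, Real.sign_of_neg hneg]
      have hb1 : 1 ≤ ⌊|x⁻¹| / lam + 1 / 2⌋ := rosen_floor_ge_one hk hlam hx hx0
      have ha0eq : rosenA lam x 0 = (⌊|x⁻¹| / lam + 1 / 2⌋ : ℤ) * lam := by
        simp [rosenA]
      rcases eq_or_lt_of_le hb1 with hbeq | hbgt
      · -- floor = 1, digit 0 is (-1, lam)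
        have ha0l : rosenA lam x 0 = lam := by
          rw [ha0eq, ← hbeq]
          push_cast
          ring
        rcases m with _ | s
        · rcases hex with h | h
          · omega
          · exact absurd ⟨he, ha0l⟩ h
        · have hsn : s ≤ n := by omega
          have hruny : ∀ i < s, rosenEps lam y i = -1 ∧ rosenA lam y i = lam := by
            intro i hi
            have := hrun (i+1) (by omega)
            rw [rosenEps_shift, rosenA_shift, ← hy] at this
            exact this
          have hexy : s = n ∨ ¬(rosenEps lam y s = -1 ∧ rosenA lam y s = lam) := by
            rcases hex with h | h
            · left; omega
            · right
              rw [show s+1 = s+1 from rfl] at h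
              rw [rosenEps_shift, rosenA_shift, ← hy] at h
              exact h
          have hrs := hratio s hsn hruny hexy
          rw [he, ha0l]
          simp only [show s+1+2 = (s+1)+2 from rfl, chebB_succ_succ lam (s+1),
            show s+1+1 = s+2 from rfl]
          nlinarith [hrs]
      · -- floor ≥ 2, a₀ ≥ 2 lam
        have ha2 : 2 * lam ≤ rosenA lam x 0 := by
          rw [ha0eq]
          have h2b : (2:ℝ) ≤ ((⌊|x⁻¹| / lam + 1 / 2⌋ : ℤ) : ℝ) := by exact_mod_cast hbgt
          nlinarith
        have hm0 : m = 0 := by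
          by_contra hm0
          have hd0 := (hrun 0 (by omega)).2
          rw [hd0] at ha2
          linarith
        subst hm0
        rw [he]
        simp only [show (0:ℕ)+2 = 2 from rfl, show (0:ℕ)+1 = 1 from rfl, chebB_two, chebB_one]
        nlinarith [hplq, mul_nonneg (sub_nonneg.mpr ha2) hq.le]
    · -- x > 0
      have he : rosenEps lam x 0 = 1 := by rw [heps0, Real.sign_of_pos hpos]
      have hm0 : m = 0 := by
        by_contra hm0
        have h0 := (hrun 0 (by omega)).1
        rw [he] at h0
        norm_num at h0
      subst hm0
      rw [he]
      simp only [show (0:ℕ)+2 = 2 from rfl, show (0:ℕ)+1 = 1 from rfl, chebB_two, chebB_one]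
      nlinarith [hplq, hq, mul_nonneg (sub_nonneg.mpr ha0) hq.le]

/-- For the Rosen continued fraction convergents of `x ∈ [-λ/2, λ/2)`, the
denominators satisfy `q_n > 0` for all `n ≥ 0`, as long as the expansion is
defined up to step `n`. -/
theorem rosen_denominators_pos (k : ℕ) (hk : 3 ≤ k) (lam : ℝ)
    (hlam : lam = 2 * Real.cos (π / k)) (x : ℝ) (hx : x ∈ Set.Ico (-lam / 2) (lam / 2))
    (n : ℕ) (hdef : ∀ i < n, (rosenMap lam)^[i] x ≠ 0) :
    0 < rosenQ lam x n :=
  (rosen_main hk hlam n x hx hdef).1
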